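/- If n ≡ 1 (mod 3) and n ≥ 4, and u is a leaf of the path P_n, then there exists a maximum dissociation set F of P_n containing u such that u has degree 0 in the induced subgraph P_n[F]. -/
import Mathlib


open scoped Classical

/-- `F` is a dissociation set of `G`: the induced subgraph `G[F]` has maximum degree ≤ 1. -/
def IsDissocSet {V : Type*} (G : SimpleGraph V) (F : Set V) : Prop :=
  ∀ u ∈ F, ∀ w ∈ F, ∀ w' ∈ F, G.Adj u w → G.Adj u w' → w = w'

/-- `F` is a maximum dissociation set of `G`. -/
def IsMaxDissocSet {V : Type*} (G : SimpleGraph V) (F : Set V) : Prop :=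
  IsDissocSet G F ∧ ∀ F' : Set V, IsDissocSet G F' → F'.ncard ≤ F.ncard

/-- The dissociation number ψ(G). -/
noncomputable def dissNum {V : Type*} (G : SimpleGraph V) : ℕ :=
  sSup {n | ∃ F : Set V, IsDissocSet G F ∧ F.ncard = n}

/-- `F` is a maximum dissociation set of the induced subgraph `G[S]`. -/
def IsMaxDissocOn {V : Type*} (G : SimpleGraph V) (S F : Set V) : Prop :=
  F ⊆ S ∧ IsDissocSet G F ∧
    ∀ F' : Set V, F' ⊆ S → IsDissocSet G F' → F'.ncard ≤ F.ncard

/-- The dissociation number of the induced subgraph `G[S]`. -/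
noncomputable def dissNumOn {V : Type*} (G : SimpleGraph V) (S : Set V) : ℕ :=
  sSup {n | ∃ F : Set V, F ⊆ S ∧ IsDissocSet G F ∧ F.ncard = n}


lemma count_lemma (k r : ℕ) (hr : r = 1 ∨ r = 2) :
    ((Finset.range (3*k+1)).filter (fun i => i % 3 ≠ r)).card = 2*k+1 := by
  induction k with
  | zero => rcases hr with h|h <;> subst h <;> decide
  | succ k ih =>
    have e1 : 3*(k+1)+1 = ((3*k+1)+1+1)+1 := by ring
    rw [e1, Finset.range_add_one, Finset.range_add_one, Finset.range_add_one,
        Finset.filter_insert, Finset.filter_insert, Finset.filter_insert]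
    have hm : ∀ m, m ∉ Finset.range (3*k+1) → ∀ s ⊆ Finset.range (3*k+1),
        m ∉ s := fun m hm s hs h => hm (hs h)
    rcases hr with h|h <;> subst h
    · rw [if_pos (by omega), if_pos (by omega), if_neg (by omega)]
      rw [Finset.card_insert_of_notMem, Finset.card_insert_of_notMem]
      · rw [ih]; ring
      · intro hmem
        have := Finset.mem_of_mem_filter _ hmem
        simp [Finset.mem_range] at this
      · intro hmem
        rcases Finset.mem_insert.1 hmem with h|h
        · omega
        · have := Finset.mem_of_mem_filter _ h
          simp [Finset.mem_range] at this
    · rw [if_pos (by omega), if_neg (by omega), if_pos (by omega)]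
      rw [Finset.card_insert_of_notMem, Finset.card_insert_of_notMem]
      · rw [ih]; ring
      · intro hmem
        have := Finset.mem_of_mem_filter _ hmem
        simp [Finset.mem_range] at this
      · intro hmem
        rcases Finset.mem_insert.1 hmem with h|h
        · omega
        · have := Finset.mem_of_mem_filter _ h
          simp [Finset.mem_range] at this

lemma ub (k : ℕ) (g : ℕ → Prop) [DecidablePred g]
    (h : ∀ i, i + 2 ≤ 3*k → ¬(g i ∧ g (i+1) ∧ g (i+2))) :
    ((Finset.range (3*k+1)).filter g).card ≤ 2*k+1 := by
  induction k with
  | zero => exact le_trans (Finset.card_filter_le _ _) (by simp)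
  | succ k ih =>
    have e1 : 3*(k+1)+1 = (3*k+1)+3 := by ring
    have e2 : Finset.range ((3*k+1)+3) =
        Finset.range (3*k+1) ∪ {3*k+1, 3*k+2, 3*k+3} := by
      ext x; simp [Finset.mem_range, Finset.mem_insert]; omega
    rw [e1, e2, Finset.filter_union]
    have hih : ((Finset.range (3*k+1)).filter g).card ≤ 2*k+1 :=
      ih (fun i hi => h i (by omega))
    have hlast : (({3*k+1, 3*k+2, 3*k+3} : Finset ℕ).filter g).card ≤ 2 := by
      have hna := h (3*k+1) (by omega)
      have hc3 : ({3*k+1, 3*k+2, 3*k+3} : Finset ℕ).card = 3 := by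
        rw [Finset.card_insert_of_notMem (by simp), Finset.card_insert_of_notMem (by simp),
          Finset.card_singleton]
      have hss : ({3*k+1, 3*k+2, 3*k+3} : Finset ℕ).filter g ⊂ {3*k+1, 3*k+2, 3*k+3} := by
        rw [Finset.filter_ssubset]
        rcases not_and_or.1 hna with h'|h'
        · exact ⟨3*k+1, by simp, h'⟩
        · rcases not_and_or.1 h' with h''|h''
          · exact ⟨3*k+2, by simp, by rwa [show 3*k+1+1 = 3*k+2 by ring] at h''⟩
          · exact ⟨3*k+3, by simp, by rwa [show 3*k+1+1+1 = 3*k+3 by ring] at h''⟩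
      have := Finset.card_lt_card hss
      omega
    calc _ ≤ _ := Finset.card_union_le _ _
      _ ≤ (2*k+1) + 2 := Nat.add_le_add hih hlast
      _ ≤ 2*(k+1)+1 := by omega

lemma card_eq (n : ℕ) (F : Set (Fin n)) :
    F.ncard = ((Finset.range n).filter
      (fun i => ∃ h : i < n, (⟨i, h⟩ : Fin n) ∈ F)).card := by
  classical
  rw [Set.ncard_eq_toFinset_card']
  apply Finset.card_bij (fun (a : Fin n) _ => a.val)
  · intro a ha
    simp only [Finset.mem_filter, Finset.mem_range]
    exact ⟨a.isLt, a.isLt, by simpa using ha⟩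
  · intro a _ b _ hab
    exact Fin.ext hab
  · intro b hb
    simp only [Finset.mem_filter, Finset.mem_range] at hb
    obtain ⟨hb1, hb2, hb3⟩ := hb
    exact ⟨⟨b, hb2⟩, by simpa using hb3, rfl⟩

lemma card_setOf (n : ℕ) (P : ℕ → Prop) [DecidablePred P] :
    ({i : Fin n | P i.val} : Set (Fin n)).ncard = ((Finset.range n).filter P).card := by
  classical
  rw [Set.ncard_eq_toFinset_card']
  apply Finset.card_bij (fun (a : Fin n) _ => a.val)
  · intro a ha
    simp only [Finset.mem_filter, Finset.mem_range]
    exact ⟨a.isLt, by simpa using ha⟩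
  · intro a _ b _ hab
    exact Fin.ext hab
  · intro b hb
    simp only [Finset.mem_filter, Finset.mem_range] at hb
    exact ⟨⟨b, hb.1⟩, by simpa using hb.2, rfl⟩


theorem stmt3 (n : ℕ) (h4 : 4 ≤ n) (hmod : n % 3 = 1) (u : Fin n)
    (hu : ((SimpleGraph.pathGraph n).neighborSet u).ncard = 1) :
    ∃ F : Set (Fin n), IsMaxDissocSet (SimpleGraph.pathGraph n) F ∧ u ∈ F ∧
      ∀ w ∈ F, ¬ (SimpleGraph.pathGraph n).Adj u w := by
  classical
  obtain ⟨k, hk⟩ : ∃ k, n = 3*k+1 := ⟨n/3, by omega⟩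
  subst hk
  -- u is an endpoint
  have hleaf : u.val = 0 ∨ u.val = 3*k := by
    by_contra hcon
    push_neg at hcon
    obtain ⟨h0, hn1⟩ := hcon
    have h1 : 0 < u.val := Nat.pos_of_ne_zero h0
    have hlt := u.isLt
    have h2 : u.val < 3*k := by omega
    have ha : (⟨u.val - 1, by omega⟩ : Fin (3*k+1)) ∈
        (SimpleGraph.pathGraph (3*k+1)).neighborSet u := by
      rw [SimpleGraph.mem_neighborSet, SimpleGraph.pathGraph_adj]
      right; simp; omega
    have hb : (⟨u.val + 1, by omega⟩ : Fin (3*k+1)) ∈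
        (SimpleGraph.pathGraph (3*k+1)).neighborSet u := by
      rw [SimpleGraph.mem_neighborSet, SimpleGraph.pathGraph_adj]
      left; simp
    have hab : (⟨u.val - 1, by omega⟩ : Fin (3*k+1)) ≠ ⟨u.val + 1, by omega⟩ := by
      intro h
      have : u.val - 1 = u.val + 1 := congrArg Fin.val h
      omega
    have hsub : ({⟨u.val - 1, by omega⟩, ⟨u.val + 1, by omega⟩} : Set (Fin (3*k+1))) ⊆
        (SimpleGraph.pathGraph (3*k+1)).neighborSet u := by
      intro x hx; rcases hx with h|h <;> subst h <;> assumption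
    have h2' := Set.ncard_pair hab
    have hle := Set.ncard_le_ncard hsub (Set.toFinite _)
    omega
  set r : ℕ := if u.val = 0 then 1 else 2 with hrdef
  have hru : (u.val = 0 ∧ r = 1) ∨ (u.val = 3*k ∧ r = 2) := by
    rcases hleaf with h|h
    · left; exact ⟨h, by simp [hrdef, h]⟩
    · right; refine ⟨h, ?_⟩; rw [hrdef, if_neg (by omega)]
  have hr12 : r = 1 ∨ r = 2 := by rcases hru with ⟨_, h⟩|⟨_, h⟩ <;> omega
  have hcard : ({i : Fin (3*k+1) | i.val % 3 ≠ r} : Set (Fin (3*k+1))).ncard = 2*k+1 :=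
    (card_setOf (3*k+1) (fun m => m % 3 ≠ r)).trans (count_lemma k r hr12)
  refine ⟨{i : Fin (3*k+1) | i.val % 3 ≠ r}, ⟨?_, ?_⟩, ?_, ?_⟩
  · -- dissociation set
    intro x hx w hw w' hw' haw haw'
    by_contra hne
    rw [SimpleGraph.pathGraph_adj] at haw haw'
    have hx' : x.val % 3 ≠ r := hx
    have hw1 : w.val % 3 ≠ r := hw
    have hw2 : w'.val % 3 ≠ r := hw'
    have hne' : w.val ≠ w'.val := fun h => hne (Fin.ext h)
    omega
  · -- maximality
    intro F' hF'
    rw [hcard, card_eq]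
    have hsub : ∀ i, i + 2 ≤ 3*k →
        ¬((∃ h : i < 3*k+1, (⟨i, h⟩ : Fin (3*k+1)) ∈ F') ∧
          (∃ h : i+1 < 3*k+1, (⟨i+1, h⟩ : Fin (3*k+1)) ∈ F') ∧
          (∃ h : i+2 < 3*k+1, (⟨i+2, h⟩ : Fin (3*k+1)) ∈ F')) := by
      rintro i hi ⟨⟨hi0, hm0⟩, ⟨hi1, hm1⟩, ⟨hi2, hm2⟩⟩
      have hadj1 : (SimpleGraph.pathGraph (3*k+1)).Adj ⟨i+1, hi1⟩ ⟨i, hi0⟩ := by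
        rw [SimpleGraph.pathGraph_adj]; right; simp
      have hadj2 : (SimpleGraph.pathGraph (3*k+1)).Adj ⟨i+1, hi1⟩ ⟨i+2, hi2⟩ := by
        rw [SimpleGraph.pathGraph_adj]; left; simp
      have heq := hF' _ hm1 _ hm0 _ hm2 hadj1 hadj2
      have : i = i + 2 := congrArg Fin.val heq
      omega
    exact ub k (fun i => ∃ h : i < 3*k+1, (⟨i, h⟩ : Fin (3*k+1)) ∈ F') hsub
  · -- u ∈ F
    show u.val % 3 ≠ r
    rcases hru with ⟨h1, h2⟩|⟨h1, h2⟩ <;> omega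
  · -- no neighbor of u in F
    intro w hw hadj
    rw [SimpleGraph.pathGraph_adj] at hadj
    have hw' : w.val % 3 ≠ r := hw
    have hwlt := w.isLt
    rcases hru with ⟨h1, h2⟩|⟨h1, h2⟩ <;> omega
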